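/- arXiv:1705.08674 — 2 statements merged into one kernel-verified Lean document; each statement's English description precedes it below -/
import Mathlib

section
/- For every n ≥ 0 and every vertex u of the n-cube Q_n, the distance cube polynomial satisfies D_{Q_n,u}(x,y) = (1 + x + y)^n. -/
def Qcube (n : ℕ) : SimpleGraph (Fin n → Bool) where
  Adj u v := hammingDist u v = 1
  symm := ⟨fun u v h => by rwa [hammingDist_comm] at h⟩
  loopless := ⟨fun u h => by simp [hammingDist_self] at h⟩

def daisySet {n : ℕ} (X : Set (Fin n → Bool)) : Set (Fin n → Bool) :=
  {u | ∃ x ∈ X, u ≤ x}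

noncomputable def cubeCount {V : Type*} (G : SimpleGraph V) (k : ℕ) : ℕ :=
  Set.ncard {S : Set V | Nonempty (G.induce S ≃g Qcube k)}

noncomputable def distToSet {V : Type*} (G : SimpleGraph V) (u : V) (S : Set V) : ℕ :=
  sInf (G.dist u '' S)

noncomputable def distCubeCount {V : Type*} (G : SimpleGraph V) (u : V) (k d : ℕ) : ℕ :=
  Set.ncard {S : Set V | Nonempty (G.induce S ≃g Qcube k) ∧ distToSet G u S = d}

noncomputable def wCount {V : Type*} (G : SimpleGraph V) (u : V) (d : ℕ) : ℕ :=
  Set.ncard {v : V | G.dist u v = d}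

def interval {V : Type*} (G : SimpleGraph V) (u v : V) : Set V :=
  {w | G.dist u v = G.dist u w + G.dist w v}

namespace AuxQ

variable {m n : ℕ}

/-- flip one coordinate -/
def flip (x : Fin n → Bool) (i : Fin n) : Fin n → Bool := Function.update x i (!(x i))

lemma flip_apply (x : Fin n → Bool) (i j : Fin n) :
    flip x i j = if j = i then !(x i) else x j := by
  simp [flip, Function.update]

@[simp] lemma flip_apply_self (x : Fin n → Bool) (i : Fin n) : flip x i i = !(x i) := by
  simp [flip_apply]

lemma flip_apply_ne (x : Fin n → Bool) {i j : Fin n} (h : j ≠ i) : flip x i j = x j := by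
  simp [flip_apply, h]

@[simp] lemma flip_flip (x : Fin n → Bool) (i : Fin n) : flip (flip x i) i = x := by
  funext j
  rcases eq_or_ne j i with rfl | h
  · simp
  · simp [flip_apply_ne _ h]

lemma flip_ne (x : Fin n → Bool) (i : Fin n) : flip x i ≠ x := by
  intro h
  have := congrFun h i
  simp at this

lemma flip_inj {x : Fin n → Bool} {i j : Fin n} (h : flip x i = flip x j) : i = j := by
  by_contra hij
  have := congrFun h i
  rw [flip_apply_self, flip_apply_ne _ hij] at this
  simp at this

lemma hd_eq_one_iff {x y : Fin n → Bool} :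
    hammingDist x y = 1 ↔ ∃ i, y = flip x i := by
  constructor
  · intro h
    rw [hammingDist, Finset.card_eq_one] at h
    obtain ⟨i, hi⟩ := h
    refine ⟨i, funext fun j => ?_⟩
    rcases eq_or_ne j i with rfl | hj
    · have : j ∈ ({j} : Finset (Fin n)) := Finset.mem_singleton_self j
      rw [← hi, Finset.mem_filter] at this
      have := this.2
      rw [flip_apply_self]
      revert this
      cases x j <;> cases y j <;> simp
    · have : j ∉ ({i} : Finset (Fin n)) := by simp [hj]
      rw [← hi, Finset.mem_filter] at this
      push_neg at this
      have := this (Finset.mem_univ j)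
      rw [flip_apply_ne _ hj]
      revert this
      cases x j <;> cases y j <;> simp
  · rintro ⟨i, rfl⟩
    rw [hammingDist, Finset.card_eq_one]
    refine ⟨i, Finset.ext fun j => ?_⟩
    simp only [Finset.mem_filter, Finset.mem_univ, true_and, Finset.mem_singleton]
    constructor
    · intro h
      by_contra hj
      exact h (flip_apply_ne x hj).symm
    · rintro rfl
      simp

lemma qcube_adj {a b : Fin n → Bool} : (Qcube n).Adj a b ↔ ∃ i, b = flip a i := by
  rw [show (Qcube n).Adj a b ↔ hammingDist a b = 1 from Iff.rfl, hd_eq_one_iff]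

lemma adj_flip (a : Fin n → Bool) (i : Fin n) : (Qcube n).Adj a (flip a i) :=
  qcube_adj.2 ⟨i, rfl⟩

/-- distance in hypercube is Hamming distance -/
lemma exists_walk (a b : Fin n → Bool) :
    ∃ p : (Qcube n).Walk a b, p.length = hammingDist a b := by
  generalize h : hammingDist a b = m
  induction m generalizing a with
  | zero => obtain rfl := eq_of_hammingDist_eq_zero h; exact ⟨.nil, rfl⟩
  | succ m ih =>
    have hne : a ≠ b := by rintro rfl; rw [hammingDist_self] at h; omega
    have : ∃ i, a i ≠ b i := by
      by_contra hc; push_neg at hc; exact hne (funext hc)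
    obtain ⟨i, hi⟩ := this
    have hab : flip a i i = b i := by
      rw [flip_apply_self]; revert hi; cases a i <;> cases b i <;> simp
    have hd : hammingDist (flip a i) b = m := by
      have : ({j | flip a i j ≠ b j} : Finset (Fin n))
          = ({j | a j ≠ b j} : Finset (Fin n)).erase i := by
        ext j
        rcases eq_or_ne j i with rfl | hj
        · simp [hab, hi]
        · simp [Finset.mem_erase, hj, flip_apply_ne _ hj]
      rw [hammingDist, this, Finset.card_erase_of_mem (by simpa using hi)]
      rw [hammingDist] at h
      omega
    obtain ⟨p, hp⟩ := ih _ hd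
    exact ⟨.cons (adj_flip a i) p, by simp [hp]⟩

lemma hd_le_walk_length {a b : Fin n → Bool} (p : (Qcube n).Walk a b) :
    hammingDist a b ≤ p.length := by
  induction p with
  | nil => simp
  | @cons c d e h q ih =>
    have h1 : hammingDist c d = 1 := h
    have h2 := hammingDist_triangle c d e
    simp only [SimpleGraph.Walk.length_cons]
    omega

lemma qdist (a b : Fin n → Bool) : (Qcube n).dist a b = hammingDist a b := by
  obtain ⟨p, hp⟩ := exists_walk a b
  refine le_antisymm (hp ▸ SimpleGraph.dist_le p) ?_
  have hr : (Qcube n).Reachable a b := ⟨p⟩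
  obtain ⟨q, hq⟩ := hr.exists_walk_length_eq_dist
  exact hq ▸ hd_le_walk_length q


/-- the subcube with free coordinate set `A` and base point `b` -/
def Sub (A : Finset (Fin n)) (b : Fin n → Bool) : Set (Fin n → Bool) :=
  {v | ∀ i ∉ A, v i = b i}

lemma hd_sub_eq {A : Finset (Fin n)} {k : ℕ} (hA : A.card = k)
    (e : Fin k ≃ {i // i ∈ A}) (v w : Fin n → Bool)
    (hv : ∀ i ∉ A, v i = w i) :
    hammingDist (fun j => v (e j)) (fun j => w (e j)) = hammingDist v w := by
  rw [hammingDist, hammingDist]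
  refine Finset.card_bij (fun j _ => (e j : Fin n)) ?_ ?_ ?_
  · intro j hj
    simp only [Finset.mem_filter, Finset.mem_univ, true_and] at hj ⊢
    exact hj
  · intro j1 h1 j2 h2 hee
    exact e.injective (Subtype.ext hee)
  · intro i hi
    simp only [Finset.mem_filter, Finset.mem_univ, true_and] at hi
    have hiA : i ∈ A := by
      by_contra hc
      exact hi (hv i hc)
    refine ⟨e.symm ⟨i, hiA⟩, ?_, ?_⟩
    · simp only [Finset.mem_filter, Finset.mem_univ, true_and, Equiv.apply_symm_apply]
      exact hi
    · simp
noncomputable def subEquiv (A : Finset (Fin n)) (b : Fin n → Bool) {k : ℕ} (hA : A.card = k)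
    (e : Fin k ≃ {i // i ∈ A}) : (Sub A b) ≃ (Fin k → Bool) := by
  classical
  refine ⟨fun v => fun j => v.1 (e j),
    fun w => ⟨fun i => if h : i ∈ A then w (e.symm ⟨i, h⟩) else b i, fun i hi => by simp [hi]⟩,
    ?_, ?_⟩
  · intro v
    refine Subtype.ext (funext fun i => ?_)
    by_cases h : i ∈ A
    · simp only [h, dif_pos]
      exact congrArg (fun t => v.1 t) (congrArg Subtype.val (e.apply_symm_apply ⟨i, h⟩))
    · simp only [h, dif_neg, not_false_iff]
      exact (v.2 i h).symm
  · intro w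
    funext j
    simp only []
    have h : (e j : Fin n) ∈ A := (e j).2
    rw [dif_pos h]
    have : (⟨(e j : Fin n), h⟩ : {i // i ∈ A}) = e j := Subtype.ext rfl
    rw [this, e.symm_apply_apply]

noncomputable def subIso (A : Finset (Fin n)) (b : Fin n → Bool) {k : ℕ} (hA : A.card = k) :
    (Qcube n).induce (Sub A b) ≃g Qcube k := by
  classical
  let e : Fin k ≃ {i // i ∈ A} := (A.equivFinOfCardEq hA).symm
  refine ⟨subEquiv A b hA e, ?_⟩
  intro v w
  show hammingDist (fun j => v.1 (e j)) (fun j => w.1 (e j)) = 1 ↔ (Qcube n).Adj v.1 w.1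
  have hv : ∀ i ∉ A, v.1 i = w.1 i := fun i hi => by rw [v.2 i hi, w.2 i hi]
  rw [hd_sub_eq hA e v.1 w.1 hv]
  exact Iff.rfl

lemma sub_nonempty (A : Finset (Fin n)) (b : Fin n → Bool) : b ∈ Sub A b :=
  fun _ _ => rfl

lemma distToSet_sub (A : Finset (Fin n)) (b : Fin n → Bool) (u : Fin n → Bool) :
    distToSet (Qcube n) u (Sub A b) = ({i | i ∉ A ∧ b i ≠ u i} : Finset (Fin n)).card := by
  classical
  set d0 := ({i | i ∉ A ∧ b i ≠ u i} : Finset (Fin n)).card with hd0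
  have hv0 : (fun i => if i ∈ A then u i else b i) ∈ Sub A b := by
    intro i hi; simp [hi]
  have hdist : (Qcube n).dist u (fun i => if i ∈ A then u i else b i) = d0 := by
    rw [qdist, hammingDist]
    congr 1
    ext i
    by_cases h : i ∈ A <;> simp [h, ne_comm]
  show sInf ((Qcube n).dist u '' (Sub A b)) = d0
  refine le_antisymm (Nat.sInf_le ⟨_, hv0, hdist⟩) ?_
  refine le_csInf ⟨_, ⟨_, hv0, rfl⟩⟩ ?_
  rintro _ ⟨v, hv, rfl⟩
  rw [qdist]
  rw [hd0]
  apply Finset.card_le_card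
  intro i hi
  simp only [Finset.mem_filter, Finset.mem_univ, true_and] at hi ⊢
  intro h
  exact hi.2 (by rw [← hv i hi.1]; exact h.symm)
lemma flip_comm (a : Fin m → Bool) {j j' : Fin m} (h : j ≠ j') :
    flip (flip a j) j' = flip (flip a j') j := by
  funext i
  by_cases h1 : i = j <;> by_cases h2 : i = j' <;>
    simp [flip_apply, h1, h2, h, Ne.symm h]

lemma flip2_ne_iff {z : Fin n → Bool} {p r : Fin n} (hpr : p ≠ r) (i : Fin n) :
    flip (flip z r) p i ≠ z i ↔ (i = p ∨ i = r) := by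
  by_cases hip : i = p
  · subst hip
    rw [flip_apply_self, flip_apply_ne z hpr]
    simp [hpr]
  · rw [flip_apply_ne _ hip]
    by_cases hir : i = r
    · subst hir
      rw [flip_apply_self]
      simp [hip]
    · rw [flip_apply_ne _ hir]
      simp [hip, hir]

lemma classify {n k : ℕ} {S : Set (Fin n → Bool)}
    (h : Nonempty ((Qcube n).induce S ≃g Qcube k)) :
    ∃ (A : Finset (Fin n)) (b : Fin n → Bool), A.card = k ∧ S = Sub A b := by
  classical
  obtain ⟨φ⟩ := h
  set F : (Fin k → Bool) → (Fin n → Bool) := fun a => (φ.symm a : Fin n → Bool) with hF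
  have hFinj : Function.Injective F := fun a b hab =>
    φ.symm.toEquiv.injective (Subtype.ext hab)
  have hF1 : ∀ a b : Fin k → Bool,
      hammingDist (F a) (F b) = 1 ↔ hammingDist a b = 1 := by
    intro a b
    exact φ.symm.map_adj_iff
  -- direction map
  have hCex : ∀ (a : Fin k → Bool) (j : Fin k), ∃ p, F (flip a j) = flip (F a) p := by
    intro a j
    have h1 : hammingDist a (flip a j) = 1 := hd_eq_one_iff.2 ⟨j, rfl⟩
    have := (hF1 a (flip a j)).2 h1
    exact hd_eq_one_iff.1 this
  set C : (Fin k → Bool) → Fin k → Fin n := fun a j => Classical.choose (hCex a j) with hC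
  have hCsp : ∀ a j, F (flip a j) = flip (F a) (C a j) := fun a j =>
    Classical.choose_spec (hCex a j)
  have hCuniq : ∀ (a : Fin k → Bool) (j : Fin k) (p : Fin n),
      F (flip a j) = flip (F a) p → p = C a j := by
    intro a j p hp
    exact flip_inj ((hCsp a j).symm.trans hp).symm
  -- reflexivity
  have hCrefl : ∀ a j, C (flip a j) j = C a j := by
    intro a j
    have h1 : F (flip (flip a j) j) = flip (flip (F a) (C a j)) (C (flip a j) j) := by
      rw [hCsp (flip a j) j, hCsp a j]
    rw [flip_flip] at h1
    have h2 : flip (flip (F a) (C a j)) (C a j) = F a := flip_flip _ _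
    exact flip_inj (h1.symm.trans h2.symm)
  -- square lemma
  have hCsq : ∀ (a : Fin k → Bool) (j j' : Fin k), j ≠ j' → C (flip a j') j = C a j := by
    intro a j j' hjj
    set z := F a with hz
    set p := C a j with hp
    set r := C a j' with hr
    set q := C (flip a j') j with hq
    set s := C (flip a j) j' with hs
    have e1 : F (flip a j) = flip z p := hCsp a j
    have e2 : F (flip a j') = flip z r := hCsp a j'
    have e3 : F (flip (flip a j') j) = flip (flip z r) q := by rw [hCsp (flip a j') j, e2]
    have e4 : F (flip (flip a j) j') = flip (flip z p) s := by rw [hCsp (flip a j) j', e1]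
    have hcomm : flip (flip a j) j' = flip (flip a j') j := flip_comm a hjj
    have emain : flip (flip z r) q = flip (flip z p) s := by rw [← e3, ← e4, hcomm]
    have hpr : p ≠ r := by
      intro hh
      have : F (flip a j) = F (flip a j') := by rw [e1, e2, hh]
      have := hFinj this
      have := congrFun this j
      rw [flip_apply_self, flip_apply_ne _ hjj] at this
      simp at this
    have hqr : q ≠ r := by
      intro hh
      have : F (flip (flip a j') j) = F a := by
        rw [e3, hh, flip_flip]
      have := hFinj this
      have := congrFun this j
      rw [flip_apply_self, flip_apply_ne _ hjj] at this
      simp at this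
    have hsp : s ≠ p := by
      intro hh
      have : F (flip (flip a j) j') = F a := by
        rw [e4, hh, flip_flip]
      have := hFinj this
      have := congrFun this j'
      rw [flip_apply_self, flip_apply_ne _ (Ne.symm hjj)] at this
      simp at this
    have hset : ∀ i, (i = q ∨ i = r) ↔ (i = s ∨ i = p) := by
      intro i
      rw [← flip2_ne_iff hqr i, ← flip2_ne_iff hsp i, emain]
    rcases (hset q).1 (Or.inl rfl) with hqs | hqp
    · rcases (hset r).1 (Or.inr rfl) with hrs | hrp
      · exact absurd (hrs.trans hqs.symm) (Ne.symm hqr)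
      · exact absurd hrp (Ne.symm hpr)
    · exact hqp
  -- C is independent of base point
  set a0 : Fin k → Bool := fun _ => false with ha0
  have hCconst : ∀ (a : Fin k → Bool) (j : Fin k), C a j = C a0 j := by
    intro a
    generalize hm : hammingDist a0 a = m
    induction m generalizing a with
    | zero =>
      obtain rfl := eq_of_hammingDist_eq_zero hm
      intro j; rfl
    | succ m ih =>
      have hne : a ≠ a0 := by
        rintro rfl; rw [hammingDist_comm, hammingDist_self] at hm; omega
      have : ∃ j', a j' = true := by
        by_contra hc
        push_neg at hc
        exact hne (funext fun i => by simpa using (hc i))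
      obtain ⟨j', hj'⟩ := this
      set b := flip a j' with hb
      have hab : a = flip b j' := by rw [hb, flip_flip]
      have hdb : hammingDist a0 b = m := by
        have hset : ({i | a0 i ≠ b i} : Finset (Fin k))
            = ({i | a0 i ≠ a i} : Finset (Fin k)).erase j' := by
          ext i
          rcases eq_or_ne i j' with rfl | hij
          · simp [hb, flip_apply_self, hj']
          · simp [Finset.mem_erase, hij, hb, flip_apply_ne _ hij]
        have hmem : j' ∈ ({i | a0 i ≠ a i} : Finset (Fin k)) := by
          simp [ha0, hj']
        rw [hammingDist, hset, Finset.card_erase_of_mem hmem]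
        rw [hammingDist] at hm
        omega
      intro j
      rcases eq_or_ne j j' with rfl | hjj
      · rw [hab, hCrefl b j]
        exact ih b hdb j
      · rw [hab, hCsq b j j' hjj]
        exact ih b hdb j
  set c : Fin k → Fin n := fun j => C a0 j with hc
  have hFc : ∀ a j, F (flip a j) = flip (F a) (c j) := by
    intro a j
    rw [hc]
    simp only []
    rw [← hCconst a j]
    exact hCsp a j
  have hcinj : Function.Injective c := by
    intro j j' hjj
    have : F (flip a0 j) = F (flip a0 j') := by
      rw [hFc, hFc, hjj]
    exact flip_inj (hFinj this)
  set z : Fin n → Bool := F a0 with hz0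
  -- structure theorem
  have hstruct : ∀ (a : Fin k → Bool) (i : Fin n),
      F a i = if (∃ j, a j = true ∧ c j = i) then !(z i) else z i := by
    intro a
    generalize hm : hammingDist a0 a = m
    induction m generalizing a with
    | zero =>
      obtain rfl := eq_of_hammingDist_eq_zero hm
      intro i
      have hno : ¬∃ j, a0 j = true ∧ c j = i := by
        rintro ⟨j, hj, -⟩
        simp [ha0] at hj
      rw [if_neg hno]
    | succ m ih =>
      have hne : a ≠ a0 := by
        rintro rfl; rw [hammingDist_comm, hammingDist_self] at hm; omega
      have : ∃ j', a j' = true := by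
        by_contra hc2
        push_neg at hc2
        exact hne (funext fun i => by simpa using (hc2 i))
      obtain ⟨j', hj'⟩ := this
      set b := flip a j' with hb
      have hab : a = flip b j' := by rw [hb, flip_flip]
      have hbj' : b j' = false := by rw [hb, flip_apply_self, hj']; rfl
      have hdb : hammingDist a0 b = m := by
        have hset : ({i | a0 i ≠ b i} : Finset (Fin k))
            = ({i | a0 i ≠ a i} : Finset (Fin k)).erase j' := by
          ext i
          rcases eq_or_ne i j' with rfl | hij
          · simp [hb, flip_apply_self, hj']
          · simp [Finset.mem_erase, hij, hb, flip_apply_ne _ hij]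
        have hmem : j' ∈ ({i | a0 i ≠ a i} : Finset (Fin k)) := by
          simp [ha0, hj']
        rw [hammingDist, hset, Finset.card_erase_of_mem hmem]
        rw [hammingDist] at hm
        omega
      intro i
      have hFa : F a i = flip (F b) (c j') i := by rw [hab, hFc]
      rcases eq_or_ne i (c j') with rfl | hic
      · rw [hFa, flip_apply_self, ih b hdb]
        rw [if_neg, if_pos ⟨j', hj', rfl⟩]
        rintro ⟨j, hj, hcj⟩
        have : j = j' := hcinj hcj
        rw [this, hbj'] at hj
        exact Bool.false_ne_true hj
      · have hiff : (∃ j, b j = true ∧ c j = i) ↔ (∃ j, a j = true ∧ c j = i) := by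
          constructor
          · rintro ⟨j, hj, hcj⟩
            have hjne : j ≠ j' := by
              rintro rfl
              rw [hbj'] at hj
              exact Bool.false_ne_true hj
            refine ⟨j, ?_, hcj⟩
            calc a j = flip b j' j := by rw [← hab]
            _ = b j := flip_apply_ne b hjne
            _ = true := hj
          · rintro ⟨j, hj, hcj⟩
            have hjne : j ≠ j' := by rintro rfl; exact hic hcj.symm
            refine ⟨j, ?_, hcj⟩
            calc b j = flip a j' j := by rw [← hb]
            _ = a j := flip_apply_ne a hjne
            _ = true := hj
        rw [hFa, flip_apply_ne _ hic, ih b hdb]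
        simp only [hiff]
  -- S = range F
  have hSrange : S = Set.range F := by
    ext v
    constructor
    · intro hv
      refine ⟨φ ⟨v, hv⟩, ?_⟩
      rw [hF]
      simp only []
      rw [φ.symm_apply_apply]
    · rintro ⟨a, rfl⟩
      exact (φ.symm a).2
  refine ⟨Finset.univ.image c, z, ?_, ?_⟩
  · rw [Finset.card_image_of_injective _ hcinj, Finset.card_univ, Fintype.card_fin]
  · rw [hSrange]
    ext v
    constructor
    · rintro ⟨a, rfl⟩
      intro i hi
      rw [hstruct a i, if_neg]
      rintro ⟨j, -, hcj⟩
      exact hi (Finset.mem_image.2 ⟨j, Finset.mem_univ j, hcj⟩)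
    · intro hv
      refine ⟨fun j => decide (v (c j) ≠ z (c j)), funext fun i => ?_⟩
      rw [hstruct]
      by_cases hi : ∃ j, c j = i
      · obtain ⟨j, rfl⟩ := hi
        by_cases hvz : v (c j) = z (c j)
        · rw [if_neg, hvz]
          rintro ⟨j2, hj2, hcj2⟩
          have : j2 = j := hcinj hcj2
          rw [this] at hj2
          simp [hvz] at hj2
        · rw [if_pos ⟨j, by simp [hvz], rfl⟩]
          revert hvz
          cases v (c j) <;> cases z (c j) <;> simp
      · rw [if_neg, (hv i (by
          intro hmem
          obtain ⟨j, -, hcj⟩ := Finset.mem_image.1 hmem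
          exact hi ⟨j, hcj⟩))]
        rintro ⟨j, -, hcj⟩
        exact hi ⟨j, hcj⟩
variable {n : ℕ}

lemma fin3 : ∀ t : Fin 3, t = 0 ∨ t = 1 ∨ t = 2 := by decide

def gA (g : Fin n → Fin 3) : Finset (Fin n) := {i | g i = 2}

def gBase (u : Fin n → Bool) (g : Fin n → Fin 3) : Fin n → Bool :=
  fun i => if g i = 1 then !u i else u i

def gSet (u : Fin n → Bool) (g : Fin n → Fin 3) : Set (Fin n → Bool) :=
  Sub (gA g) (gBase u g)

lemma mem_gA {g : Fin n → Fin 3} {i : Fin n} : i ∈ gA g ↔ g i = 2 := by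
  simp [gA]

lemma mem_gSet_fix {u : Fin n → Bool} {g : Fin n → Fin 3} {v : Fin n → Bool}
    (hv : v ∈ gSet u g) {i : Fin n} (hi : g i ≠ 2) : v i = gBase u g i :=
  hv i (fun hm => hi (mem_gA.1 hm))

lemma chi_mem_gSet (u : Fin n → Bool) (g : Fin n → Fin 3) (w : Bool) :
    (fun i => if g i = 2 then w else gBase u g i) ∈ gSet u g := by
  intro i hi
  show (if g i = 2 then w else gBase u g i) = gBase u g i
  rw [if_neg (fun h => hi (mem_gA.2 h))]

lemma Sub_congr {A : Finset (Fin n)} {b b' : Fin n → Bool}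
    (h : ∀ i ∉ A, b i = b' i) : Sub A b = Sub A b' := by
  ext v
  constructor <;> intro hv i hi
  · rw [← h i hi]; exact hv i hi
  · rw [h i hi]; exact hv i hi

lemma gSet_injective (u : Fin n → Bool) : Function.Injective (gSet (n := n) u) := by
  classical
  have key : ∀ g g' : Fin n → Fin 3, gSet u g = gSet u g' → ∀ i, g i = 2 → g' i = 2 := by
    intro g g' hs i h2
    by_contra hne
    have hT := chi_mem_gSet u g true
    have hF := chi_mem_gSet u g false
    rw [hs] at hT hF
    have h1 := mem_gSet_fix hT hne
    have h2' := mem_gSet_fix hF hne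
    simp only [h2, if_pos] at h1 h2'
    rw [← h2'] at h1
    exact Bool.false_ne_true h1.symm
  have key2 : ∀ g g' : Fin n → Fin 3, gSet u g = gSet u g' → ∀ i, g i = 0 → g' i ≠ 1 := by
    intro g g' hs i h0 h1'
    have hb : gBase u g ∈ gSet u g := sub_nonempty _ _
    rw [hs] at hb
    have := mem_gSet_fix hb (i := i) (by rw [h1']; decide)
    rw [gBase, gBase] at this
    simp only [h0, h1'] at this
    simp at this
  intro g g' hgg
  funext i
  rcases fin3 (g i) with h | h | h <;> rcases fin3 (g' i) with h' | h' | h' <;>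
      rw [h, h']
  · exact absurd h' (key2 g g' hgg i h)
  · have := key g' g hgg.symm i h'
    rw [h] at this
    exact absurd this (by decide)
  · exact absurd h (key2 g' g hgg.symm i h')
  · have := key g' g hgg.symm i h'
    rw [h] at this
    exact absurd this (by decide)
  · have := key g g' hgg i h
    rw [h'] at this
    exact absurd this (by decide)
  · have := key g g' hgg i h
    rw [h'] at this
    exact absurd this (by decide)

lemma distToSet_gSet (u : Fin n → Bool) (g : Fin n → Fin 3) :
    distToSet (Qcube n) u (gSet u g) = ({i | g i = 1} : Finset (Fin n)).card := by
  classical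
  rw [gSet, distToSet_sub]
  congr 1
  ext i
  simp only [Finset.mem_filter, Finset.mem_univ, true_and, mem_gA]
  constructor
  · rintro ⟨h2, hb⟩
    rcases fin3 (g i) with h | h | h
    · exfalso
      apply hb
      rw [gBase]
      simp [h]
    · exact h
    · exact absurd h h2
  · intro h1
    refine ⟨by rw [h1]; decide, ?_⟩
    rw [gBase]
    simp only [h1, if_pos]
    cases u i <;> simp

lemma setEq (u : Fin n → Bool) (k d : ℕ) :
    {S : Set (Fin n → Bool) | Nonempty ((Qcube n).induce S ≃g Qcube k) ∧
        distToSet (Qcube n) u S = d}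
      = gSet u '' {g | (gA g).card = k ∧ ({i | g i = 1} : Finset (Fin n)).card = d} := by
  classical
  ext S
  constructor
  · rintro ⟨hiso, hdist⟩
    obtain ⟨A, b, hA, rfl⟩ := classify hiso
    set g : Fin n → Fin 3 := fun i => if i ∈ A then 2 else if b i = u i then 0 else 1 with hg
    have hgA : gA g = A := by
      ext i
      rw [mem_gA, hg]
      by_cases hi : i ∈ A
      · simp [hi]
      · simp only [hi, if_neg, if_false]
        by_cases hbu : b i = u i <;> simp [hbu]
    have hgS : gSet u g = Sub A b := by
      rw [gSet, hgA]
      refine Sub_congr fun i hi => ?_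
      rw [gBase, hg]
      simp only [hi, if_neg, if_false]
      by_cases hbu : b i = u i
      · simp [hbu]
      · simp only [hbu, if_neg, if_false, if_pos]
        revert hbu
        cases b i <;> cases u i <;> simp
    refine ⟨g, ⟨?_, ?_⟩, hgS⟩
    · rw [hgA]; exact hA
    · rw [← hdist, ← hgS, distToSet_gSet]
  · rintro ⟨g, ⟨hk, hd⟩, rfl⟩
    exact ⟨⟨subIso (gA g) (gBase u g) hk⟩, by rw [distToSet_gSet, hd]⟩

lemma distCubeCount_eq (u : Fin n → Bool) (k d : ℕ) :
    distCubeCount (Qcube n) u k d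
      = ({g : Fin n → Fin 3 | (gA g).card = k ∧
          ({i | g i = 1} : Finset (Fin n)).card = d} : Finset _).card := by
  classical
  rw [distCubeCount, setEq, Set.ncard_image_of_injective _ (gSet_injective u)]
  rw [Set.ncard_eq_toFinset_card']
  congr 1
  ext g
  simp
end AuxQ
theorem distCubePolynomial_of_hypercube (n : ℕ) (u : Fin n → Bool) (x y : ℝ) :
    ∑ k ∈ Finset.range (n + 1), ∑ d ∈ Finset.range (n + 1),
      (distCubeCount (Qcube n) u k d : ℝ) * x ^ k * y ^ d = (1 + x + y) ^ n := by
  classical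
  set w : Fin 3 → ℝ := fun t => if t = 2 then x else if t = 1 then y else 1 with hw
  set a : (Fin n → Fin 3) → ℕ := fun g => (AuxQ.gA g).card with ha
  set bf : (Fin n → Fin 3) → ℕ := fun g => ({i | g i = 1} : Finset (Fin n)).card with hbf
  have hprod : ∀ g : Fin n → Fin 3, (∏ i, w (g i)) = x ^ (a g) * y ^ (bf g) := by
    intro g
    rw [← Finset.prod_filter_mul_prod_filter_not Finset.univ (fun i => g i = 2)
      (fun i => w (g i))]
    have h1 : (∏ i ∈ Finset.univ.filter (fun i => g i = 2), w (g i)) = x ^ a g := by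
      have hc : ∀ i ∈ Finset.univ.filter (fun i => g i = 2), w (g i) = x := by
        intro i hi
        rw [Finset.mem_filter] at hi
        rw [hw]
        simp [hi.2]
      rw [Finset.prod_congr rfl hc, Finset.prod_const]
      rfl
    have h2 : (∏ i ∈ Finset.univ.filter (fun i => ¬g i = 2), w (g i)) = y ^ bf g := by
      rw [← Finset.prod_filter_mul_prod_filter_not
        (Finset.univ.filter (fun i => ¬g i = 2)) (fun i => g i = 1) (fun i => w (g i))]
      have hset : (Finset.univ.filter (fun i => ¬g i = 2)).filter (fun i => g i = 1)
          = Finset.univ.filter (fun i => g i = 1) := by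
        ext i
        simp only [Finset.mem_filter, Finset.mem_univ, true_and]
        constructor
        · rintro ⟨-, h⟩; exact h
        · intro h; exact ⟨by rw [h]; decide, h⟩
      have hc1 : ∀ i ∈ (Finset.univ.filter (fun i => ¬g i = 2)).filter (fun i => g i = 1),
          w (g i) = y := by
        intro i hi
        rw [Finset.mem_filter] at hi
        rw [hw]
        simp [hi.2, show g i ≠ 2 from (Finset.mem_filter.1 hi.1).2]
      have hc2 : ∀ i ∈ (Finset.univ.filter (fun i => ¬g i = 2)).filter (fun i => ¬g i = 1),
          w (g i) = 1 := by
        intro i hi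
        rw [Finset.mem_filter] at hi
        obtain ⟨hi1, hi2⟩ := hi
        rw [Finset.mem_filter] at hi1
        rw [hw]
        simp [hi2, hi1.2]
      rw [Finset.prod_congr rfl hc1, Finset.prod_congr rfl hc2, Finset.prod_const,
        Finset.prod_const, one_pow, mul_one, hset]
    rw [h1, h2]
  have hsum : ∑ g : Fin n → Fin 3, x ^ a g * y ^ bf g = (1 + x + y) ^ n := by
    have e1 : ∑ g : Fin n → Fin 3, x ^ a g * y ^ bf g
        = ∑ g : Fin n → Fin 3, ∏ i, w (g i) :=
      Finset.sum_congr rfl fun g _ => (hprod g).symm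
    have e2 := Finset.prod_univ_sum (fun _ : Fin n => (Finset.univ : Finset (Fin 3)))
      (fun _ t => w t)
    rw [Fintype.piFinset_univ] at e2
    have e3 : ∑ t : Fin 3, w t = 1 + x + y := by
      have h0 : w 0 = 1 := by rw [hw]; simp
      have h1 : w 1 = y := by rw [hw]; simp
      have h2 : w 2 = x := by rw [hw]; simp
      rw [Fin.sum_univ_three, h0, h1, h2]
      ring
    rw [e1, ← e2, Finset.prod_congr rfl (fun i _ => e3), Finset.prod_const,
      Finset.card_univ, Fintype.card_fin]
  have hmap : ∀ g ∈ (Finset.univ : Finset (Fin n → Fin 3)),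
      (a g, bf g) ∈ Finset.range (n + 1) ×ˢ Finset.range (n + 1) := by
    intro g _
    rw [Finset.mem_product, Finset.mem_range, Finset.mem_range]
    constructor
    · apply Nat.lt_succ_of_le
      exact le_trans (Finset.card_le_univ (AuxQ.gA g)) (by simp)
    · apply Nat.lt_succ_of_le
      exact le_trans (Finset.card_le_univ ({i | g i = 1} : Finset (Fin n))) (by simp)
  have hfib := Finset.sum_fiberwise_of_maps_to hmap (fun g => x ^ a g * y ^ bf g)
  calc ∑ k ∈ Finset.range (n + 1), ∑ d ∈ Finset.range (n + 1),
      (distCubeCount (Qcube n) u k d : ℝ) * x ^ k * y ^ d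
      = ∑ p ∈ Finset.range (n + 1) ×ˢ Finset.range (n + 1),
          (distCubeCount (Qcube n) u p.1 p.2 : ℝ) * x ^ p.1 * y ^ p.2 := by
        rw [Finset.sum_product]
    _ = ∑ p ∈ Finset.range (n + 1) ×ˢ Finset.range (n + 1),
          ∑ g ∈ Finset.univ.filter (fun g => (a g, bf g) = p), x ^ a g * y ^ bf g := by
        refine Finset.sum_congr rfl fun p hp => ?_
        have hconst : ∀ g ∈ Finset.univ.filter (fun g => (a g, bf g) = p),
            x ^ a g * y ^ bf g = x ^ p.1 * y ^ p.2 := by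
          intro g hg
          obtain ⟨-, hg⟩ := Finset.mem_filter.1 hg
          rw [← hg]
        rw [Finset.sum_congr rfl hconst, Finset.sum_const, nsmul_eq_mul]
        have hfilter : Finset.univ.filter (fun g => (a g, bf g) = p)
            = ({g : Fin n → Fin 3 | (AuxQ.gA g).card = p.1 ∧
                ({i | g i = 1} : Finset (Fin n)).card = p.2} : Finset _) := by
          ext g
          simp [Prod.ext_iff, ha, hbf]
        rw [hfilter, AuxQ.distCubeCount_eq u p.1 p.2]
        ring
    _ = ∑ g : Fin n → Fin 3, x ^ a g * y ^ bf g := hfib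
    _ = (1 + x + y) ^ n := hsum
end

section
/- For every n ≥ 1, the cube polynomial of the Fibonacci cube Γ_n satisfies C_{Γ_n}(x) = Σ_{k=0}^{⌊(n+1)/2⌋} binom(n−k+1, k) (1 + x)^k. -/
def fibSet (n : ℕ) : Set (Fin n → Bool) :=
  {u | ∀ i j : Fin n, (j : ℕ) = (i : ℕ) + 1 → ¬(u i = true ∧ u j = true)}

lemma zero_mem_fibSet (n : ℕ) : (fun _ => false) ∈ fibSet n := by
  intro i j _ h
  simp at h

namespace FibAux

variable {n k : ℕ}

def fx (u v : Fin n → Bool) : Fin n → Bool := fun j => xor (u j) (v j)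
def zw : Fin n → Bool := fun _ => false
def ind (j : Fin n) : Fin n → Bool := fun j' => decide (j' = j)
def supp (u : Fin n → Bool) : Finset (Fin n) := Finset.univ.filter (fun j => u j = true)

@[simp] lemma mem_supp {u : Fin n → Bool} {j : Fin n} : j ∈ supp u ↔ u j = true := by
  simp [supp]

def wt (u : Fin n → Bool) : ℕ := (supp u).card

lemma hamming_eq_wt (u v : Fin n → Bool) : hammingDist u v = wt (fx u v) := by
  unfold hammingDist wt supp fx
  congr 1
  apply Finset.filter_congr
  intro j _
  cases u j <;> cases v j <;> simp

@[simp] lemma fx_self (u : Fin n → Bool) : fx u u = zw := by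
  funext j; simp [fx, zw]

@[simp] lemma fx_zw (u : Fin n → Bool) : fx u zw = u := by
  funext j; simp [fx, zw]

@[simp] lemma zw_fx (u : Fin n → Bool) : fx zw u = u := by
  funext j; simp [fx, zw]

lemma fx_comm (u v : Fin n → Bool) : fx u v = fx v u := by
  funext j; simp [fx, Bool.xor_comm]

lemma fx_assoc (u v w : Fin n → Bool) : fx (fx u v) w = fx u (fx v w) := by
  funext j; simp [fx, Bool.xor_assoc]

@[simp] lemma fx_cancel_left (u v : Fin n → Bool) : fx u (fx u v) = v := by
  funext j; simp [fx, ← Bool.xor_assoc]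

lemma fx_left_cancel {u v w : Fin n → Bool} (h : fx u v = fx u w) : v = w := by
  have := congrArg (fx u) h
  simpa using this

lemma fx_eq_zw_iff {u v : Fin n → Bool} : fx u v = zw ↔ u = v := by
  constructor
  · intro h
    funext j
    have := congrFun h j
    simpa [fx, zw] using this
  · rintro rfl; simp

lemma wt_eq_one_iff {a : Fin n → Bool} : wt a = 1 ↔ ∃ j, a = ind j := by
  constructor
  · intro h
    obtain ⟨j, hj⟩ := Finset.card_eq_one.mp h
    refine ⟨j, funext fun j' => ?_⟩
    have : a j' = true ↔ j' = j := by
      rw [← mem_supp, hj]; simp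
    by_cases hjj : j' = j
    · subst hjj; simp [ind, this.mpr rfl]
    · simp only [ind, hjj, decide_false]
      cases h' : a j'
      · rfl
      · exact absurd (this.mp h') hjj
  · rintro ⟨j, rfl⟩
    rw [wt]
    convert Finset.card_singleton j
    ext j'
    simp [ind]

lemma hamming_one_iff {u v : Fin n → Bool} : hammingDist u v = 1 ↔ ∃ j, fx u v = ind j := by
  rw [hamming_eq_wt, wt_eq_one_iff]

lemma ind_inj : Function.Injective (ind : Fin n → (Fin n → Bool)) := by
  intro a b h
  have := congrFun h a
  simpa [ind] using this

lemma para {α β γ δ : Fin n} (hab : α ≠ β) (hac : α ≠ γ)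
    (h : fx (ind α) (ind γ) = fx (ind β) (ind δ)) : γ = β ∧ δ = α := by
  have h1 := congrFun h α
  simp only [fx, ind] at h1
  simp [hab, hac] at h1
  subst h1
  have h2 := congrFun h γ
  simp only [fx, ind] at h2
  simp [Ne.symm hac, fun hh : γ = α => hac hh.symm] at h2
  exact ⟨h2, rfl⟩

lemma parallelogram {p q r s : Fin n → Bool}
    (hpq : hammingDist p q = 1) (hpr : hammingDist p r = 1)
    (hqs : hammingDist q s = 1) (hrs : hammingDist r s = 1)
    (hqr : q ≠ r) (hps : p ≠ s) : fx p s = fx (fx p q) (fx p r) := by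
  obtain ⟨α, ha⟩ := hamming_one_iff.mp hpq
  obtain ⟨β, hb⟩ := hamming_one_iff.mp hpr
  obtain ⟨γ, hc⟩ := hamming_one_iff.mp hqs
  obtain ⟨δ, hd⟩ := hamming_one_iff.mp hrs
  have key1 : fx (ind α) (ind γ) = fx p s := by
    rw [← ha, ← hc]
    funext j; simp only [fx]; cases p j <;> cases q j <;> cases s j <;> rfl
  have key2 : fx (ind β) (ind δ) = fx p s := by
    rw [← hb, ← hd]
    funext j; simp only [fx]; cases p j <;> cases r j <;> cases s j <;> rfl
  have hab : α ≠ β := by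
    rintro rfl
    exact hqr (fx_left_cancel (ha.trans hb.symm))
  have hac : α ≠ γ := by
    rintro rfl
    apply hps
    rw [← fx_eq_zw_iff, ← key1]
    simp
  obtain ⟨h1, -⟩ := para hab hac (key1.trans key2.symm)
  subst h1
  rw [← key1, ← ha, ← hb]

lemma hamming_update (u : Fin n → Bool) (i : Fin n) (h : u i = false) :
    fx u (Function.update u i true) = ind i := by
  funext j
  by_cases hj : j = i
  · subst hj; simp [fx, ind, h]
  · simp [fx, ind, Function.update_of_ne hj, hj]

lemma hamming_update' (u : Fin n → Bool) (i : Fin n) (h : u i = false) :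
    hammingDist u (Function.update u i true) = 1 := by
  rw [hamming_one_iff]
  exact ⟨i, hamming_update u i h⟩

end FibAux

namespace FibAux2
open FibAux
variable {n k : ℕ}

lemma fx4 (a b c e : Fin n → Bool) : fx (fx a b) (fx c e) = fx a (fx (fx b c) e) := by
  funext j
  simp only [fx]
  cases a j <;> cases b j <;> cases c j <;> cases e j <;> rfl

lemma fx3 (a b c : Fin n → Bool) : fx (fx a b) (fx a (fx b c)) = c := by
  funext j
  simp only [fx]
  cases a j <;> cases b j <;> cases c j <;> rfl

def mask (d : Fin k → Fin n) (u : Fin k → Bool) : Fin n → Bool :=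
  fun j => decide (∃ i, u i = true ∧ d i = j)

lemma mask_zw (d : Fin k → Fin n) : mask d zw = zw := by
  funext j; simp [mask, zw]

lemma mask_ind (d : Fin k → Fin n) (i : Fin k) : mask d (ind i) = ind (d i) := by
  funext j
  simp only [mask, ind]
  apply decide_eq_decide.mpr
  constructor
  · rintro ⟨i', hi', rfl⟩
    rw [decide_eq_true_eq] at hi'; subst hi'; rfl
  · rintro rfl
    exact ⟨i, by simp, rfl⟩

lemma mask_update (d : Fin k → Fin n) (hd : Function.Injective d) (u : Fin k → Bool)
    (i : Fin k) (h : u i = false) :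
    mask d (Function.update u i true) = fx (mask d u) (ind (d i)) := by
  funext j
  by_cases hj : j = d i
  · subst hj
    have h1 : mask d u (d i) = false := by
      simp only [mask, decide_eq_false_iff_not]
      rintro ⟨i', hi', hdi⟩
      have hii : i' = i := hd hdi
      subst hii; rw [h] at hi'; exact absurd hi' (by simp)
    have h2 : mask d (Function.update u i true) (d i) = true := by
      simp only [mask, decide_eq_true_eq]
      exact ⟨i, by simp, rfl⟩
    simp [fx, ind, h1, h2]
  · have heq : mask d (Function.update u i true) j = mask d u j := by
      simp only [mask]
      apply decide_eq_decide.mpr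
      constructor
      · rintro ⟨i', hi', rfl⟩
        rcases eq_or_ne i' i with rfl | hne
        · exact absurd rfl hj
        · rw [Function.update_of_ne hne] at hi'
          exact ⟨i', hi', rfl⟩
      · rintro ⟨i', hi', rfl⟩
        rcases eq_or_ne i' i with rfl | hne
        · rw [h] at hi'; exact absurd hi' (by simp)
        · exact ⟨i', by rwa [Function.update_of_ne hne], rfl⟩
    rw [heq]
    simp [fx, ind, hj]

lemma supp_update_false (u : Fin n → Bool) (i : Fin n) :
    supp (Function.update u i false) = (supp u).erase i := by
  ext j
  rcases eq_or_ne j i with rfl | hne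
  · simp
  · simp [Function.update_of_ne hne, hne]

lemma wt_update_false {u : Fin n → Bool} {i : Fin n} (h : u i = true) :
    wt (Function.update u i false) = wt u - 1 := by
  rw [wt, supp_update_false, Finset.card_erase_of_mem (mem_supp.mpr h)]
  rfl

lemma update_zw (i : Fin k) : Function.update (zw : Fin k → Bool) i true = ind i := by
  funext j
  rcases eq_or_ne j i with rfl | hne
  · simp [ind]
  · simp [Function.update_of_ne hne, zw, ind, hne]

lemma eq_zw_of_wt_eq_zero {u : Fin n → Bool} (h : wt u = 0) : u = zw := by
  have : supp u = ∅ := Finset.card_eq_zero.mp h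
  funext j
  cases hj : u j
  · rfl
  · exfalso
    have : j ∈ supp u := mem_supp.mpr hj
    simp [Finset.card_eq_zero.mp h] at this

lemma extract (g : (Fin k → Bool) → (Fin n → Bool)) (hinj : Function.Injective g)
    (hadj : ∀ u v, hammingDist u v = 1 → hammingDist (g u) (g v) = 1) :
    ∃ d : Fin k → Fin n, Function.Injective d ∧ ∀ u, g u = fx (g zw) (mask d u) := by
  have hone : ∀ i : Fin k, ∃ j, fx (g zw) (g (ind i)) = ind j := by
    intro i
    rw [← hamming_one_iff]
    apply hadj
    rw [← update_zw i]
    exact hamming_update' zw i rfl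
  choose d hd using hone
  have hgind : ∀ i, g (ind i) = fx (g zw) (ind (d i)) := by
    intro i
    rw [← hd i, fx_cancel_left]
  have hdinj : Function.Injective d := by
    intro a b hab
    have : g (ind a) = g (ind b) := by rw [hgind, hgind, hab]
    exact ind_inj (hinj this)
  refine ⟨d, hdinj, ?_⟩
  have main : ∀ m u, wt u = m → g u = fx (g zw) (mask d u) := by
    intro m
    induction m using Nat.strong_induction_on with
    | _ m IH =>
      intro u hu
      match m, hu with
      | 0, hu =>
        rw [eq_zw_of_wt_eq_zero hu, mask_zw, fx_zw]
      | 1, hu =>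
        obtain ⟨i, rfl⟩ := wt_eq_one_iff.mp hu
        rw [hgind, mask_ind]
      | (m+2), hu =>
        obtain ⟨i, hi, i', hi', hii⟩ := Finset.one_lt_card.mp (by rw [show (supp u).card = wt u from rfl, hu]; omega)
        rw [mem_supp] at hi hi'
        set q := Function.update u i false with hqdef
        set r := Function.update u i' false with hrdef
        set v := Function.update q i' false with hvdef
        have hvi : v i = false := by
          rw [hvdef, Function.update_of_ne hii, hqdef, Function.update_self]
        have hvi' : v i' = false := by rw [hvdef, Function.update_self]
        have hqi : q i = false := by rw [hqdef, Function.update_self]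
        have hri' : r i' = false := by rw [hrdef, Function.update_self]
        have hqi' : q i' = true := by rw [hqdef, Function.update_of_ne (Ne.symm hii)]; exact hi'
        have hri : r i = true := by rw [hrdef, Function.update_of_ne hii]; exact hi
        have hq : Function.update v i' true = q := by
          rw [hvdef, Function.update_idem, ← hqi', Function.update_eq_self]
        have hvr : v = Function.update r i false := by
          rw [hvdef, hqdef, hrdef, Function.update_comm hii]
        have hr : Function.update v i true = r := by
          rw [hvr, Function.update_idem, ← hri, Function.update_eq_self]
        have huq : Function.update q i true = u := by
          rw [hqdef, Function.update_idem, ← hi, Function.update_eq_self]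
        have hur : Function.update r i' true = u := by
          rw [hrdef, Function.update_idem, ← hi', Function.update_eq_self]
        -- weights
        have hwq : wt q = m + 1 := by
          rw [hqdef, wt_update_false hi, hu]; omega
        have hwr : wt r = m + 1 := by
          rw [hrdef, wt_update_false hi', hu]; omega
        have hwv : wt v = m := by
          rw [hvdef, wt_update_false hqi', hwq]; omega
        -- adjacency
        have hpq : hammingDist (g v) (g q) = 1 := by
          rw [← hq]; exact hadj _ _ (hamming_update' v i' hvi')
        have hpr : hammingDist (g v) (g r) = 1 := by
          rw [← hr]; exact hadj _ _ (hamming_update' v i hvi)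
        have hqs : hammingDist (g q) (g u) = 1 := by
          rw [← huq]; exact hadj _ _ (hamming_update' q i hqi)
        have hrs : hammingDist (g r) (g u) = 1 := by
          rw [← hur]; exact hadj _ _ (hamming_update' r i' hri')
        have hqr : g q ≠ g r := by
          intro hgg
          have : q = r := hinj hgg
          rw [← this] at hri
          rw [hqi] at hri
          exact absurd hri (by simp)
        have hps : g v ≠ g u := by
          intro hgg
          have hvu : v = u := hinj hgg
          rw [hvu] at hvi
          rw [hi] at hvi
          exact absurd hvi (by simp)
        have hpara := parallelogram hpq hpr hqs hrs hqr hps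
        -- IH values
        have hgv : g v = fx (g zw) (mask d v) := IH m (by omega) v hwv
        have hgq : g q = fx (g zw) (mask d q) := IH (m+1) (by omega) q hwq
        have hgr : g r = fx (g zw) (mask d r) := IH (m+1) (by omega) r hwr
        have hmq : mask d q = fx (mask d v) (ind (d i')) := by
          rw [← hq, mask_update d hdinj v i' hvi']
        have hmr : mask d r = fx (mask d v) (ind (d i)) := by
          rw [← hr, mask_update d hdinj v i hvi]
        have hmu : mask d u = fx (fx (mask d v) (ind (d i'))) (ind (d i)) := by
          rw [← huq, mask_update d hdinj q i hqi, hmq]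
        have e1 : fx (g v) (g q) = ind (d i') := by
          rw [hgv, hgq, hmq, fx3]
        have e2 : fx (g v) (g r) = ind (d i) := by
          rw [hgv, hgr, hmr, fx3]
        have : g u = fx (g v) (fx (ind (d i')) (ind (d i))) := by
          rw [← e1, ← e2, ← hpara, fx_cancel_left]
        rw [this, hgv, hmu, fx4, fx_assoc]
  intro u
  exact main (wt u) u rfl

end FibAux2

namespace FibAux3
open FibAux FibAux2
variable {n k : ℕ}

def cube (t : Fin n → Bool) (D : Finset (Fin n)) : Set (Fin n → Bool) :=
  {u | ∀ j ∉ D, u j = t j}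

lemma hamming_toFun (D : Finset (Fin n)) (σ : {x // x ∈ D} ≃ Fin k)
    (a b : Fin n → Bool) (ha : ∀ j ∉ D, a j = b j) :
    hammingDist a b = hammingDist (fun i => a ((σ.symm i) : Fin n)) (fun i => b ((σ.symm i) : Fin n)) := by
  unfold hammingDist
  refine Finset.card_bij'
    (fun j hj => σ ⟨j, by
      by_contra hD
      exact (Finset.mem_filter.mp hj).2 (ha j hD)⟩)
    (fun i _ => ((σ.symm i) : Fin n)) ?_ ?_ ?_ ?_
  · intro j hj
    simp only [Finset.mem_filter, Finset.mem_univ, true_and] at hj ⊢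
    simpa using hj
  · intro i hi
    simp only [Finset.mem_filter, Finset.mem_univ, true_and] at hi ⊢
    exact hi
  · intro j hj
    simp
  · intro i hi
    simp

lemma cube_iso (t : Fin n → Bool) (D : Finset (Fin n)) (hk : D.card = k) :
    Nonempty ((Qcube n).induce (cube t D) ≃g Qcube k) := by
  classical
  obtain σ := Finset.equivFinOfCardEq hk
  refine ⟨⟨Equiv.mk
    (fun w => fun i => w.1 ((σ.symm i) : Fin n))
    (fun u => ⟨fun j => if h : j ∈ D then u (σ ⟨j, h⟩) else t j,
      fun j hj => dif_neg hj⟩)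
    ?_ ?_, ?_⟩⟩
  · intro w
    apply Subtype.ext
    funext j
    by_cases h : j ∈ D
    · simp [h]
    · simp [h, (w.2 j h).symm]
  · intro u
    funext i
    simp
  · intro a b
    simp only [Equiv.coe_fn_mk]
    rw [show (Qcube k).Adj (fun i => a.1 ((σ.symm i) : Fin n)) (fun i => b.1 ((σ.symm i) : Fin n)) ↔
        hammingDist (fun i => a.1 ((σ.symm i) : Fin n)) (fun i => b.1 ((σ.symm i) : Fin n)) = 1 from Iff.rfl]
    rw [← hamming_toFun D σ a.1 b.1 (fun j hj => by rw [a.2 j hj, b.2 j hj])]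
    rfl

end FibAux3

namespace FibAux4
open FibAux FibAux2 FibAux3
variable {n k : ℕ}

lemma iso_subcube (A : Set (Fin n → Bool)) (e : (Qcube n).induce A ≃g Qcube k) :
    ∃ (t : Fin n → Bool) (D : Finset (Fin n)), D.card = k ∧ (∀ j ∈ D, t j = true) ∧ A = cube t D := by
  classical
  set g : (Fin k → Bool) → (Fin n → Bool) := fun u => ((e.symm u : A) : Fin n → Bool) with hg
  have hinj : Function.Injective g := fun u v huv =>
    e.symm.toEquiv.injective (Subtype.val_injective huv)
  have hadj : ∀ u v, hammingDist u v = 1 → hammingDist (g u) (g v) = 1 := by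
    intro u v h
    have h2 : ((Qcube n).induce A).Adj (e.symm u) (e.symm v) :=
      (SimpleGraph.Iso.map_adj_iff e.symm).mpr h
    exact h2
  have hrange : A = Set.range g := by
    ext a
    constructor
    · intro ha
      exact ⟨e ⟨a, ha⟩, by simp [hg]⟩
    · rintro ⟨u, rfl⟩
      exact (e.symm u).2
  obtain ⟨d, hdinj, hform⟩ := extract g hinj hadj
  set D := Finset.image d Finset.univ with hDdef
  have hD : D.card = k := by
    rw [hDdef, Finset.card_image_of_injective _ hdinj, Finset.card_univ, Fintype.card_fin]
  set t : Fin n → Bool := fun j => if j ∈ D then true else g zw j with htdef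
  refine ⟨t, D, hD, fun j hj => if_pos hj, ?_⟩
  rw [hrange]
  ext w
  simp only [Set.mem_range, cube, Set.mem_setOf_eq]
  constructor
  · rintro ⟨u, rfl⟩ j hj
    rw [hform u]
    have hmaskj : mask d u j = false := by
      simp only [mask, decide_eq_false_iff_not]
      rintro ⟨i, hi, rfl⟩
      exact hj (Finset.mem_image_of_mem d (Finset.mem_univ i))
    show xor (g zw j) (mask d u j) = t j
    rw [hmaskj, htdef]
    simp [hj]
  · intro hw
    refine ⟨fun i => xor (w (d i)) (g zw (d i)), ?_⟩
    rw [hform]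
    funext j
    by_cases hjD : j ∈ D
    · obtain ⟨i, -, rfl⟩ := Finset.mem_image.mp hjD
      have hmask : mask d (fun i' => xor (w (d i')) (g zw (d i'))) (d i)
          = xor (w (d i)) (g zw (d i)) := by
        simp only [mask]
        cases h' : xor (w (d i)) (g zw (d i))
        · rw [decide_eq_false_iff_not]
          rintro ⟨i', hi', hdi⟩
          have hii : i' = i := hdinj hdi
          subst hii
          rw [h'] at hi'
          exact absurd hi' (by simp)
        · exact decide_eq_true ⟨i, h', rfl⟩
      show xor (g zw (d i)) _ = w (d i)
      rw [hmask]
      cases w (d i) <;> cases g zw (d i) <;> rfl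
    · have hmaskj : mask d (fun i' => xor (w (d i')) (g zw (d i'))) j = false := by
        simp only [mask, decide_eq_false_iff_not]
        rintro ⟨i, hi, rfl⟩
        exact hjD (Finset.mem_image_of_mem d (Finset.mem_univ i))
      show xor (g zw j) _ = w j
      rw [hmaskj]
      have := hw j hjD
      rw [htdef] at this
      simp only [if_neg hjD] at this
      rw [this]
      cases g zw j <;> rfl

end FibAux4

namespace FibAux5
open FibAux FibAux2 FibAux3 FibAux4
open scoped Classical
variable {n k : ℕ}

lemma nestIso {V : Type*} (G : SimpleGraph V) (A : Set V) (S : Set ↥A) :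
    Nonempty ((G.induce A).induce S ≃g G.induce (Subtype.val '' S)) := by
  have hbij : Function.Bijective
      (fun a : ↥S => (⟨a.1.1, ⟨a.1, a.2, rfl⟩⟩ : ↥(Subtype.val '' S))) := by
    constructor
    · intro a b hab
      exact Subtype.ext (Subtype.ext (by have h := congrArg Subtype.val hab; exact h))
    · rintro ⟨b, a, ha, rfl⟩
      exact ⟨⟨a, ha⟩, rfl⟩
  exact ⟨⟨Equiv.ofBijective _ hbij, fun {a b} => Iff.rfl⟩⟩

lemma cubeCount_transfer :
    cubeCount ((Qcube n).induce (fibSet n)) k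
      = Set.ncard {A : Set (Fin n → Bool) |
          A ⊆ fibSet n ∧ Nonempty ((Qcube n).induce A ≃g Qcube k)} := by
  rw [cubeCount]
  rw [← Set.ncard_image_of_injective _ (Set.image_injective.mpr Subtype.val_injective)]
  congr 1
  ext A
  simp only [Set.mem_image, Set.mem_setOf_eq]
  constructor
  · rintro ⟨S, hS, rfl⟩
    constructor
    · rintro a ⟨s, _, rfl⟩
      exact s.2
    · obtain ⟨e⟩ := hS
      obtain ⟨e'⟩ := nestIso (Qcube n) (fibSet n) S
      exact ⟨e'.symm.trans e⟩
  · rintro ⟨hA, ⟨e⟩⟩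
    have himg : Subtype.val '' (Subtype.val ⁻¹' A : Set ↥(fibSet n)) = A := by
      rw [Set.image_preimage_eq_iff, Subtype.range_coe]
      exact hA
    refine ⟨Subtype.val ⁻¹' A, ?_, himg⟩
    obtain ⟨e'⟩ := nestIso (Qcube n) (fibSet n) (Subtype.val ⁻¹' A)
    rw [himg] at e'
    exact ⟨e'.trans e⟩

noncomputable def FW (n : ℕ) : Finset (Fin n → Bool) :=
  Finset.univ.filter (· ∈ fibSet n)

lemma mem_FW {u : Fin n → Bool} : u ∈ FW n ↔ u ∈ fibSet n := by
  simp [FW]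

lemma fib_mono {u t : Fin n → Bool} (h : ∀ j, u j = true → t j = true)
    (ht : t ∈ fibSet n) : u ∈ fibSet n :=
  fun i j hij hu => ht i j hij ⟨h i hu.1, h j hu.2⟩

lemma self_mem_cube (t : Fin n → Bool) (D : Finset (Fin n)) : t ∈ cube t D :=
  fun _ _ => rfl

lemma cube_subset_fib {t : Fin n → Bool} {D : Finset (Fin n)}
    (htD : ∀ j ∈ D, t j = true) (ht : t ∈ fibSet n) : cube t D ⊆ fibSet n := by
  intro u hu
  apply fib_mono (t := t) ?_ ht
  intro j huj
  by_cases hj : j ∈ D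
  · exact htD j hj
  · rw [← hu j hj]
    exact huj

lemma cube_injOn :
    ∀ (t : Fin n → Bool) (D : Finset (Fin n)) (t' : Fin n → Bool) (D' : Finset (Fin n)),
    (∀ j ∈ D, t j = true) → (∀ j ∈ D', t' j = true) →
    cube t D = cube t' D' → t = t' ∧ D = D' := by
  have key : ∀ (t : Fin n → Bool) (D : Finset (Fin n)) (t' : Fin n → Bool) (D' : Finset (Fin n)),
      (∀ j ∈ D, t j = true) → (∀ j ∈ D', t' j = true) →
      cube t D = cube t' D' → ∀ j ∈ D, j ∈ D' := by
    intro t D t' D' hD hD' hc j hj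
    by_contra hj'
    have h1 : t ∈ cube t' D' := hc ▸ self_mem_cube t D
    have h2 : Function.update t j false ∈ cube t D := by
      intro j2 hj2
      exact Function.update_of_ne (fun h => hj2 (by rw [h]; exact hj)) _ _
    have h3 : Function.update t j false ∈ cube t' D' := hc ▸ h2
    have e1 : t j = t' j := h1 j hj'
    have e2 : Function.update t j false j = t' j := h3 j hj'
    rw [Function.update_self] at e2
    rw [hD j hj] at e1
    rw [← e2] at e1
    exact Bool.noConfusion e1
  intro t D t' D' hD hD' hc
  have hDD' : D = D' := by
    apply Finset.Subset.antisymm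
    · intro j hj; exact key t D t' D' hD hD' hc j hj
    · intro j hj; exact key t' D' t D hD' hD hc.symm j hj
  subst hDD'
  refine ⟨?_, rfl⟩
  funext j
  by_cases hj : j ∈ D
  · rw [hD j hj, hD' j hj]
  · exact (hc ▸ self_mem_cube t D) j hj

lemma cubeCount_eq :
    cubeCount ((Qcube n).induce (fibSet n)) k = ∑ t ∈ FW n, (wt t).choose k := by
  rw [cubeCount_transfer]
  have hset : {A : Set (Fin n → Bool) |
      A ⊆ fibSet n ∧ Nonempty ((Qcube n).induce A ≃g Qcube k)}
      = ↑(((FW n).sigma (fun t => (supp t).powersetCard k)).image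
          (fun p => cube p.1 p.2)) := by
    ext A
    simp only [Finset.coe_image, Set.mem_image, Finset.mem_coe, Finset.mem_sigma,
      Finset.mem_powersetCard, Set.mem_setOf_eq]
    constructor
    · rintro ⟨hA, ⟨e⟩⟩
      obtain ⟨t, D, hcard, htD, rfl⟩ := iso_subcube A e
      refine ⟨⟨t, D⟩, ⟨mem_FW.mpr (hA (self_mem_cube t D)), ?_, hcard⟩, rfl⟩
      intro j hj
      exact mem_supp.mpr (htD j hj)
    · rintro ⟨⟨t, D⟩, ⟨ht, hDs, hcard⟩, rfl⟩
      have htD : ∀ j ∈ D, t j = true := fun j hj => mem_supp.mp (hDs hj)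
      exact ⟨cube_subset_fib htD (mem_FW.mp ht), cube_iso t D hcard⟩
  rw [hset, Set.ncard_coe_finset]
  rw [Finset.card_image_of_injOn]
  · rw [Finset.card_sigma]
    apply Finset.sum_congr rfl
    intro t _
    rw [Finset.card_powersetCard]
    rfl
  · rintro ⟨t, D⟩ hp ⟨t', D'⟩ hp' hc
    simp only [Finset.mem_coe, Finset.mem_sigma, Finset.mem_powersetCard] at hp hp'
    have h1 : ∀ j ∈ D, t j = true := fun j hj => mem_supp.mp (hp.2.1 hj)
    have h2 : ∀ j ∈ D', t' j = true := fun j hj => mem_supp.mp (hp'.2.1 hj)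
    obtain ⟨ht, hD⟩ := cube_injOn t D t' D' h1 h2 hc
    subst ht; subst hD; rfl

end FibAux5

namespace FibAux6
open FibAux FibAux2 FibAux3 FibAux4 FibAux5
open scoped Classical
variable {n : ℕ}

noncomputable def Pol (n : ℕ) (y : ℝ) : ℝ :=
  ∑ u : Fin n → Bool, if u ∈ fibSet n then y ^ wt u else 0

noncomputable def Pol0 (n : ℕ) (y : ℝ) : ℝ :=
  ∑ u : Fin (n+1) → Bool, if u ∈ fibSet (n+1) ∧ u 0 = false then y ^ wt u else 0

lemma pol_eq_sum_FW (n : ℕ) (y : ℝ) : Pol n y = ∑ t ∈ FW n, y ^ wt t := by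
  rw [Pol, FW, Finset.sum_filter]

lemma wt_cons (b : Bool) (t : Fin n → Bool) :
    wt (Fin.cons b t) = (if b then 1 else 0) + wt t := by
  unfold wt supp
  rw [Finset.card_filter, Finset.card_filter, Fin.sum_univ_succ]
  cases b <;> simp [Fin.cons_zero, Fin.cons_succ]

lemma fib_cons (b : Bool) (t : Fin n → Bool) :
    Fin.cons b t ∈ fibSet (n+1) ↔
      t ∈ fibSet n ∧ ∀ i : Fin n, (i : ℕ) = 0 → ¬(b = true ∧ t i = true) := by
  constructor
  · intro h
    constructor
    · intro i j hij hu
      have := h i.succ j.succ (by simp [Fin.val_succ, hij])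
      simp only [Fin.cons_succ] at this
      exact this hu
    · intro i hi hu
      have := h 0 i.succ (by simp [Fin.val_succ, hi])
      simp only [Fin.cons_succ, Fin.cons_zero] at this
      exact this hu
  · rintro ⟨ht, h0⟩ i j hij hu
    have hj0 : j ≠ 0 := by
      intro h
      rw [h] at hij
      simp at hij
    obtain ⟨j0, rfl⟩ := Fin.eq_succ_of_ne_zero hj0
    rcases Fin.eq_zero_or_eq_succ i with rfl | ⟨i0, rfl⟩
    · have hj00 : (j0 : ℕ) = 0 := by
        have : (j0 : ℕ) + 1 = 0 + 1 := by
          rw [← Fin.val_succ]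
          exact hij
        omega
      simp only [Fin.cons_zero, Fin.cons_succ] at hu
      exact h0 j0 hj00 hu
    · have hij0 : (j0 : ℕ) = (i0 : ℕ) + 1 := by
        have : (j0 : ℕ) + 1 = ((i0 : ℕ) + 1) + 1 := by
          rw [← Fin.val_succ, ← Fin.val_succ]
          exact hij
        omega
      simp only [Fin.cons_succ] at hu
      exact ht i0 j0 hij0 hu

lemma fib_cons_false (t : Fin n → Bool) :
    Fin.cons false t ∈ fibSet (n+1) ↔ t ∈ fibSet n := by
  rw [fib_cons]
  simp

lemma fib_cons_true (t : Fin (n+1) → Bool) :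
    Fin.cons true t ∈ fibSet (n+2) ↔ t ∈ fibSet (n+1) ∧ t 0 = false := by
  rw [fib_cons]
  constructor
  · rintro ⟨ht, h0⟩
    refine ⟨ht, ?_⟩
    have := h0 0 rfl
    simp only [true_and] at this
    cases h : t 0
    · rfl
    · exact absurd h this
  · rintro ⟨ht, h0⟩
    refine ⟨ht, ?_⟩
    intro i hi
    have : i = 0 := Fin.ext hi
    subst this
    rw [h0]
    simp

lemma sum_cons_decomp (f : (Fin (n+1) → Bool) → ℝ) :
    ∑ u : Fin (n+1) → Bool, f u
      = ∑ t : Fin n → Bool, (f (Fin.cons false t) + f (Fin.cons true t)) := by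
  rw [← Equiv.sum_comp (Fin.consEquiv (fun _ : Fin (n+1) => Bool)) f]
  rw [Fintype.sum_prod_type, Fintype.sum_bool, ← Finset.sum_add_distrib]
  apply Finset.sum_congr rfl
  intro t _
  rw [add_comm]
  rfl

lemma pol_rec1 (n : ℕ) (y : ℝ) : Pol (n+2) y = Pol (n+1) y + y * Pol0 n y := by
  rw [Pol, sum_cons_decomp]
  rw [Finset.sum_add_distrib]
  congr 1
  · rw [Pol]
    apply Finset.sum_congr rfl
    intro t _
    by_cases ht : t ∈ fibSet (n+1)
    · rw [if_pos ((fib_cons_false t).mpr ht), if_pos ht, wt_cons]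
      simp
    · rw [if_neg (fun h => ht ((fib_cons_false t).mp h)), if_neg ht]
  · rw [Pol0, Finset.mul_sum]
    apply Finset.sum_congr rfl
    intro t _
    by_cases ht : t ∈ fibSet (n+1) ∧ t 0 = false
    · rw [if_pos ((fib_cons_true t).mpr ht), if_pos ht, wt_cons]
      simp [pow_add]
    · rw [if_neg (fun h => ht ((fib_cons_true t).mp h)), if_neg ht, mul_zero]

lemma pol_rec2 (n : ℕ) (y : ℝ) : Pol0 n y = Pol n y := by
  rw [Pol0, Pol, sum_cons_decomp]
  apply Finset.sum_congr rfl
  intro t _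
  have h2 : ¬(Fin.cons true t ∈ fibSet (n+1) ∧ (Fin.cons true t : Fin (n+1) → Bool) 0 = false) := by
    rintro ⟨-, h⟩
    rw [Fin.cons_zero] at h
    exact Bool.noConfusion h
  rw [if_neg h2, add_zero]
  by_cases ht : t ∈ fibSet n
  · rw [if_pos ⟨(fib_cons_false t).mpr ht, Fin.cons_zero _ _⟩, if_pos ht, wt_cons]
    simp
  · have h3 : ¬(Fin.cons false t ∈ fibSet (n+1) ∧ (Fin.cons false t : Fin (n+1) → Bool) 0 = false) :=
      fun h => ht ((fib_cons_false t).mp h.1)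
    rw [if_neg h3, if_neg ht]

lemma pol_rec (n : ℕ) (y : ℝ) : Pol (n+2) y = Pol (n+1) y + y * Pol n y := by
  rw [pol_rec1, pol_rec2]

end FibAux6

namespace FibAux7
open FibAux FibAux2 FibAux3 FibAux4 FibAux5 FibAux6
open scoped Classical

noncomputable def Rhs (n : ℕ) (y : ℝ) : ℝ :=
  ∑ i ∈ Finset.range ((n+1)/2 + 1), ((n - i + 1).choose i : ℝ) * y ^ i

lemma choose_zero_big {n i : ℕ} (hn : 1 ≤ n) (hi : (n+1)/2 + 1 ≤ i) :
    (n - i + 1).choose i = 0 := by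
  apply Nat.choose_eq_zero_of_lt
  omega

lemma rhs_pad (n N : ℕ) (hn : 1 ≤ n) (hN : (n+1)/2 + 1 ≤ N) (y : ℝ) :
    Rhs n y = ∑ i ∈ Finset.range N, ((n - i + 1).choose i : ℝ) * y ^ i := by
  rw [Rhs]
  apply Finset.sum_subset (Finset.range_subset_range.mpr hN)
  intro i _ hi
  rw [Finset.mem_range, not_lt] at hi
  rw [choose_zero_big hn hi]
  simp

lemma rhs_zero (y : ℝ) : Rhs 0 y = 1 := by
  norm_num [Rhs]

lemma rhs_one (y : ℝ) : Rhs 1 y = 1 + y := by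
  norm_num [Rhs, Finset.sum_range_succ]

lemma rhs_two (y : ℝ) : Rhs 2 y = 1 + 2 * y := by
  norm_num [Rhs, Finset.sum_range_succ]

lemma rhs_rec (n : ℕ) (y : ℝ) : Rhs (n+2) y = Rhs (n+1) y + y * Rhs n y := by
  rcases n with _ | m
  · rw [rhs_two, rhs_one, rhs_zero]
    ring
  · have hm : 1 ≤ m + 1 := by omega
    have eA : Rhs (m+1+2) y
        = ∑ i ∈ Finset.range ((m+3)+1), ((m + 1 + 2 - i + 1).choose i : ℝ) * y ^ i :=
      rhs_pad (m+3) ((m+3)+1) (by omega) (by omega) y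
    have eB : Rhs (m+1+1) y
        = ∑ i ∈ Finset.range ((m+3)+1), ((m + 1 + 1 - i + 1).choose i : ℝ) * y ^ i :=
      rhs_pad (m+2) ((m+3)+1) (by omega) (by omega) y
    have eC : Rhs (m+1) y
        = ∑ i ∈ Finset.range (m+3), ((m + 1 - i + 1).choose i : ℝ) * y ^ i :=
      rhs_pad (m+1) (m+3) (by omega) (by omega) y
    rw [eA, eB, eC]
    rw [Finset.sum_range_succ' (fun i => ((m + 1 + 2 - i + 1).choose i : ℝ) * y ^ i) (m+3)]
    rw [Finset.sum_range_succ' (fun i => ((m + 1 + 1 - i + 1).choose i : ℝ) * y ^ i) (m+3)]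
    rw [Finset.mul_sum]
    have key : ∀ i ∈ Finset.range (m+3),
        ((m + 1 + 2 - (i+1) + 1).choose (i+1) : ℝ) * y ^ (i+1)
          = ((m + 1 + 1 - (i+1) + 1).choose (i+1) : ℝ) * y ^ (i+1)
            + y * (((m + 1 - i + 1).choose i : ℝ) * y ^ i) := by
      intro i hi
      rw [Finset.mem_range] at hi
      have hnat : (m + 1 + 2 - (i+1) + 1).choose (i+1)
          = (m + 1 + 1 - (i+1) + 1).choose (i+1) + (m + 1 - i + 1).choose i := by
        by_cases him : i ≤ m + 1
        · have h1 : m + 1 + 2 - (i+1) + 1 = (m + 1 - i + 1) + 1 := by omega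
          have h2 : m + 1 + 1 - (i+1) + 1 = m + 1 - i + 1 := by omega
          rw [h1, h2, Nat.choose_succ_succ]
          exact Nat.add_comm _ _
        · rw [Nat.choose_eq_zero_of_lt (by omega), Nat.choose_eq_zero_of_lt (by omega),
            Nat.choose_eq_zero_of_lt (by omega)]
      rw [hnat]
      push_cast
      ring
    rw [Finset.sum_congr rfl key, Finset.sum_add_distrib]
    simp only [Nat.choose_zero_right, Nat.cast_one, pow_zero, mul_one]
    ring

noncomputable def PolF := FibAux6.Pol

lemma pol_eq_rhs : ∀ (n : ℕ) (y : ℝ), Pol n y = Rhs n y := by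
  intro n
  induction n using Nat.strong_induction_on with
  | _ n IH =>
    match n with
    | 0 =>
      intro y
      rw [rhs_zero]
      rw [Pol, Fintype.sum_unique]
      split
      · simp [wt, supp]
      · next h => exact absurd (fun i => i.elim0) h
    | 1 =>
      intro y
      rw [rhs_one]
      rw [Pol]
      rw [← Equiv.sum_comp (Equiv.funUnique (Fin 1) Bool).symm]
      rw [Fintype.sum_bool]
      have hall : ∀ u : Fin 1 → Bool, u ∈ fibSet 1 := by
        intro u i j hij
        have h1 := j.isLt
        have h2 := i.isLt
        exact absurd hij (by omega)
      have hv : ∀ b : Bool, (Equiv.funUnique (Fin 1) Bool).symm b = fun _ : Fin 1 => b :=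
        fun b => rfl
      rw [hv, hv, if_pos (hall _), if_pos (hall _)]
      have hw0 : wt (fun _ : Fin 1 => false) = 0 := by simp [wt, supp]
      have hw1 : wt (fun _ : Fin 1 => true) = 1 := by simp [wt, supp]
      rw [hw0, hw1, pow_zero, pow_one]
      ring
    | (n+2) =>
      intro y
      rw [pol_rec, rhs_rec, IH (n+1) (by omega), IH n (by omega)]

lemma binom_sum (m N : ℕ) (hm : m ≤ N) (x : ℝ) :
    ∑ k ∈ Finset.range (N+1), ((m.choose k : ℝ)) * x ^ k = (1 + x) ^ m := by
  have h2 : ∑ k ∈ Finset.range (N+1), ((m.choose k : ℝ)) * x ^ k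
      = ∑ k ∈ Finset.range (m+1), ((m.choose k : ℝ)) * x ^ k := by
    symm
    apply Finset.sum_subset (Finset.range_subset_range.mpr (by omega))
    intro k _ hk
    rw [Finset.mem_range, not_lt] at hk
    rw [Nat.choose_eq_zero_of_lt (by omega)]
    simp
  rw [h2, add_comm (1:ℝ) x, add_pow]
  apply Finset.sum_congr rfl
  intro k _
  rw [one_pow, mul_one, mul_comm]

end FibAux7


theorem cubePolynomial_of_Fibonacci_cube (n : ℕ) (hn : 1 ≤ n) (x : ℝ) :
    ∑ k ∈ Finset.range (2 ^ n + 1),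
      (cubeCount ((Qcube n).induce (fibSet n)) k : ℝ) * x ^ k =
    ∑ k ∈ Finset.range ((n + 1) / 2 + 1), ((n - k + 1).choose k : ℝ) * (1 + x) ^ k := by
  classical
  have step1 : ∑ k ∈ Finset.range (2 ^ n + 1),
      (cubeCount ((Qcube n).induce (fibSet n)) k : ℝ) * x ^ k
      = ∑ k ∈ Finset.range (2 ^ n + 1), ∑ t ∈ FibAux5.FW n,
          ((FibAux.wt t).choose k : ℝ) * x ^ k := by
    apply Finset.sum_congr rfl
    intro k _
    rw [FibAux5.cubeCount_eq]
    push_cast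
    rw [Finset.sum_mul]
  rw [step1, Finset.sum_comm]
  have step2 : ∀ t ∈ FibAux5.FW n,
      ∑ k ∈ Finset.range (2 ^ n + 1), ((FibAux.wt t).choose k : ℝ) * x ^ k
        = (1 + x) ^ (FibAux.wt t) := by
    intro t _
    apply FibAux7.binom_sum
    have h1 : FibAux.wt t ≤ n := by
      have := Finset.card_le_univ (FibAux.supp t)
      simpa [FibAux.wt] using this
    exact h1.trans Nat.lt_two_pow_self.le
  rw [Finset.sum_congr rfl step2]
  rw [← FibAux6.pol_eq_sum_FW n (1+x), FibAux7.pol_eq_rhs n (1+x)]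
  rfl
end
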